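/- Let (fₙ)_{n∈ℕ} be Borel measurable functions fₙ : 𝕋³ → ℝ³ and let (ν_x)_{x∈𝕋³} be a family of Borel probability measures on ℝ³ such that x ↦ ν_x(E) is Borel measurable for every Borel E ⊆ ℝ³, and assume that for every bounded continuous φ : ℝ³ → ℝ and every bounded continuous ψ : 𝕋³ → ℝ, lim_{n→∞} ∫_{𝕋³} φ(fₙ(x)) ψ(x) dx = ∫_{𝕋³} ( ∫_{ℝ³} φ(y) ν_x(dy) ) ψ(x) dx. Fix x₀ ∈ 𝕋³ and ε > 0, and let ν^n_{x₀,ε} be the local occupation measure of fₙ around x₀ of size ε. Then for every bounded continuous φ : ℝ³ → ℝ, lim_{n→∞} ∫_{ℝ³} φ(y) ν^n_{x₀,ε}(dy) = (1/Leb(B(x₀,ε))) ∫_{B(x₀,ε)} ( ∫_{ℝ³} φ(y) ν_x(dy) ) dx; that is, ν^n_{x₀,ε} converges weakly to the average (1/Leb(B(x₀,ε))) ∫_{B(x₀,ε)} ν_x dx. -/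

import Mathlib

open MeasureTheory

noncomputable section

instance : Fact (0 < 2 * Real.pi) := ⟨Real.two_pi_pos⟩

/-- The three-dimensional torus `𝕋³ = ℝ³/(2πℤ)³`, with its quotient metric (coordinatewise)
and its Haar (Lebesgue) measure `Leb` of total mass `(2π)³`. -/
abbrev Torus3 := Fin 3 → AddCircle (2 * Real.pi)

/-- `ℝ³` with the Euclidean norm. -/
abbrev E3 := EuclideanSpace ℝ (Fin 3)

/-- The local occupation measure of `f` around `x₀` of size `ε`: the pushforward under `f`
of the normalized Lebesgue measure `(1/Leb(B(x₀,ε))) Leb|_{B(x₀,ε)}` on the ball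
`B(x₀,ε) ⊆ 𝕋³`. -/
def occupationMeasure (f : Torus3 → E3) (x₀ : Torus3) (ε : ℝ) : Measure E3 :=
  (volume (Metric.ball x₀ ε))⁻¹ • Measure.map f (volume.restrict (Metric.ball x₀ ε))

/-- If `∫ φ(fₙ(x)) ψ(x) dx → ∫ (∫ φ(y) ν_x(dy)) ψ(x) dx` for all bounded
continuous `φ, ψ`, then for fixed `x₀ ∈ 𝕋³` and `ε > 0` the local occupation measures
`ν^n_{x₀,ε}` of `fₙ` converge weakly to the average `(1/Leb(B(x₀,ε))) ∫_{B(x₀,ε)} ν_x dx`. -/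
theorem occupation_measures_converge
    (f : ℕ → Torus3 → E3) (hf : ∀ n, Measurable (f n))
    (ν : Torus3 → Measure E3) (hprob : ∀ x, IsProbabilityMeasure (ν x))
    (hmeas : ∀ E : Set E3, MeasurableSet E → Measurable fun x => ν x E)
    (hconv : ∀ (φ : BoundedContinuousFunction E3 ℝ) (ψ : BoundedContinuousFunction Torus3 ℝ),
      Filter.Tendsto (fun n => ∫ x, φ (f n x) * ψ x ∂volume) Filter.atTop
        (nhds (∫ x, (∫ y, φ y ∂(ν x)) * ψ x ∂volume)))
    (x₀ : Torus3) (ε : ℝ) (hε : 0 < ε) :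
    ∀ φ : BoundedContinuousFunction E3 ℝ,
      Filter.Tendsto (fun n => ∫ y, φ y ∂(occupationMeasure (f n) x₀ ε)) Filter.atTop
        (nhds ((volume (Metric.ball x₀ ε)).toReal⁻¹ *
          ∫ x in Metric.ball x₀ ε, (∫ y, φ y ∂(ν x)) ∂volume)) := by

  intro φ
  set B := Metric.ball x₀ ε with hBdef
  have hBmeas : MeasurableSet B := Metric.isOpen_ball.measurableSet
  -- rewrite the occupation-measure integral
  have key : ∀ n, ∫ y, φ y ∂(occupationMeasure (f n) x₀ ε)
      = (volume B).toReal⁻¹ * ∫ x in B, φ (f n x) ∂volume := by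
    intro n
    rw [occupationMeasure, integral_smul_measure,
      integral_map (hf n).aemeasurable φ.continuous.stronglyMeasurable.aestronglyMeasurable,
      ENNReal.toReal_inv, smul_eq_mul]
  simp only [key]
  refine Filter.Tendsto.const_mul _ ?_
  -- measurability of x ↦ ∫ φ dν x
  have hκm : Measurable ν := Measure.measurable_of_measurable_coe ν hmeas
  let κ : ProbabilityTheory.Kernel Torus3 E3 := ⟨ν, hκm⟩
  haveI hκ : ProbabilityTheory.IsMarkovKernel κ := ⟨hprob⟩
  set F : Torus3 → ℝ := fun x => ∫ y, φ y ∂(ν x) with hFdef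
  have hF : StronglyMeasurable F := by
    have h : StronglyMeasurable (Function.uncurry fun (_ : Torus3) (y : E3) => φ y) :=
      φ.continuous.stronglyMeasurable.comp_measurable measurable_snd
    exact h.integral_kernel_prod_right (κ := κ)
  have hFbound : ∀ x, |F x| ≤ ‖φ‖ := by
    intro x
    rw [← Real.norm_eq_abs]
    calc ‖∫ y, φ y ∂(ν x)‖ ≤ ‖φ‖ * ((ν x) Set.univ).toReal :=
          norm_integral_le_of_norm_le_const (Filter.Eventually.of_forall fun y =>
            φ.norm_coe_le_norm y)
      _ = ‖φ‖ := by simp [(hprob x).measure_univ]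
  have hgbound : ∀ n x, |φ (f n x)| ≤ ‖φ‖ := fun n x => by
    rw [← Real.norm_eq_abs]; exact φ.norm_coe_le_norm _
  -- the sequence of radii
  set M : ℝ := ‖φ‖ + 1 with hMdef
  have hM : 0 < M := lt_of_lt_of_le zero_lt_one (by simp [hMdef, norm_nonneg])
  rw [Metric.tendsto_atTop]
  intro η hη
  have hη3 : 0 < η / 3 := by positivity
  -- shrink the ball a bit: find δ with small annulus
  set s : ℕ → Set Torus3 := fun k => B \ Metric.ball x₀ (ε - ε / (k + 1)) with hsdef
  have hanti : Antitone s := by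
    intro k l hkl
    apply Set.diff_subset_diff_right
    apply Metric.ball_subset_ball
    have : ε / (l + 1) ≤ ε / (k + 1) := by
      apply div_le_div_of_nonneg_left hε.le (by positivity)
      exact_mod_cast by omega
    linarith
  have hiInter : ⋂ k, s k = ∅ := by
    ext y
    simp only [Set.mem_iInter, Set.mem_empty_iff_false, iff_false, not_forall]
    by_cases hy : y ∈ B
    · have hd : dist y x₀ < ε := Metric.mem_ball.1 hy
      obtain ⟨k, hk⟩ := exists_nat_gt (ε / (ε - dist y x₀))
      refine ⟨k, ?_⟩
      simp only [hsdef, Set.mem_diff, not_and, not_not]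
      intro _
      rw [Metric.mem_ball]
      have hpos : 0 < ε - dist y x₀ := by linarith
      have hk1 : ε / (ε - dist y x₀) < (k : ℝ) + 1 := by
        calc ε / (ε - dist y x₀) < k := hk
          _ ≤ (k : ℝ) + 1 := by linarith
      have : ε / ((k : ℝ) + 1) < ε - dist y x₀ := by
        rw [div_lt_iff₀ (by positivity)]
        rw [div_lt_iff₀ hpos] at hk1
        linarith [hk1]
      linarith
    · exact ⟨0, fun h => hy h.1⟩
  have htend : Filter.Tendsto (fun k => volume (s k)) Filter.atTop (nhds 0) := by
    have := tendsto_measure_iInter_atTop (μ := volume) (s := s)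
      (fun k => (hBmeas.diff Metric.isOpen_ball.measurableSet).nullMeasurableSet)
      hanti ⟨0, measure_ne_top _ _⟩
    rwa [hiInter, measure_empty] at this
  have hsmall : ∃ k, volume (s k) < ENNReal.ofReal (η / (3 * M)) := by
    have hpos : (0 : ENNReal) < ENNReal.ofReal (η / (3 * M)) :=
      ENNReal.ofReal_pos.2 (by positivity)
    exact (htend.eventually (Iio_mem_nhds hpos)).exists
  obtain ⟨k, hk⟩ := hsmall
  set δ : ℝ := ε / (k + 1) with hδdef
  have hδ : 0 < δ := by positivity
  set A : Set Torus3 := s k with hAdef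
  have hAmeas : MeasurableSet A := hBmeas.diff Metric.isOpen_ball.measurableSet
  have hAsmall : M * (volume A).toReal < η / 3 := by
    have h1 : (volume A).toReal < η / (3 * M) := ENNReal.toReal_lt_of_lt_ofReal hk
    calc M * (volume A).toReal < M * (η / (3 * M)) := by
          exact mul_lt_mul_of_pos_left h1 hM
      _ = η / 3 := by field_simp
  -- the cutoff function
  set ψ : Torus3 → ℝ := fun x => max 0 (min 1 ((ε - dist x x₀) / δ)) with hψdef
  have hψcont : Continuous ψ := by
    apply continuous_const.max
    apply continuous_const.min
    exact ((continuous_const.sub (continuous_id.dist continuous_const)).div_const δ)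
  have hψ0 : ∀ x, 0 ≤ ψ x := fun x => le_max_left _ _
  have hψ1 : ∀ x, ψ x ≤ 1 := fun x => max_le zero_le_one (min_le_left _ _)
  have hψ_out : ∀ x : Torus3, ε ≤ dist x x₀ → ψ x = 0 := by
    intro x hx
    have : (ε - dist x x₀) / δ ≤ 0 := div_nonpos_of_nonpos_of_nonneg (by linarith) hδ.le
    exact max_eq_left (le_trans (min_le_right _ _) this)
  have hψ_in : ∀ x : Torus3, dist x x₀ < ε - δ → ψ x = 1 := by
    intro x hx
    have h1 : (1 : ℝ) ≤ (ε - dist x x₀) / δ := by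
      rw [le_div_iff₀ hδ]; linarith
    rw [hψdef]
    simp only [min_eq_left h1, max_eq_right zero_le_one]
  -- the key per-function estimate
  have bound : ∀ g : Torus3 → ℝ, AEStronglyMeasurable g volume → (∀ x, |g x| ≤ ‖φ‖) →
      |(∫ x in B, g x ∂volume) - ∫ x, g x * ψ x ∂volume| ≤ M * (volume A).toReal := by
    intro g hgm hgb
    have hgint : Integrable g volume := by
      refine ⟨hgm, ?_⟩
      apply HasFiniteIntegral.of_bounded (C := ‖φ‖)
      exact Filter.Eventually.of_forall fun x => by
        rw [Real.norm_eq_abs]; exact hgb x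
    have hgψint : Integrable (fun x => g x * ψ x) volume := by
      refine ⟨hgm.mul hψcont.aestronglyMeasurable, ?_⟩
      apply HasFiniteIntegral.of_bounded (C := ‖φ‖)
      refine Filter.Eventually.of_forall fun x => ?_
      rw [Real.norm_eq_abs, abs_mul]
      calc |g x| * |ψ x| ≤ ‖φ‖ * 1 := by
            apply mul_le_mul (hgb x) _ (abs_nonneg _) (norm_nonneg _)
            rw [abs_of_nonneg (hψ0 x)]; exact hψ1 x
        _ = ‖φ‖ := mul_one _
    have hind : Integrable (fun x => B.indicator g x) volume :=
      hgint.indicator hBmeas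
    rw [← integral_indicator hBmeas, ← integral_sub hind hgψint]
    have hptwise : ∀ x, |B.indicator g x - g x * ψ x| ≤ A.indicator (fun _ => M) x := by
      intro x
      by_cases hxB : x ∈ B
      · by_cases hxb : x ∈ Metric.ball x₀ (ε - δ)
        · have hxA : x ∉ A := fun h => h.2 hxb
          rw [Set.indicator_of_mem hxB, Set.indicator_of_notMem hxA,
            hψ_in x (Metric.mem_ball.1 hxb), mul_one, sub_self, abs_zero]
        · have hxA : x ∈ A := ⟨hxB, hxb⟩
          rw [Set.indicator_of_mem hxB, Set.indicator_of_mem hxA]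
          have : g x - g x * ψ x = g x * (1 - ψ x) := by ring
          rw [this, abs_mul]
          calc |g x| * |1 - ψ x| ≤ ‖φ‖ * 1 := by
                apply mul_le_mul (hgb x) _ (abs_nonneg _) (norm_nonneg _)
                rw [abs_of_nonneg (by linarith [hψ1 x])]
                linarith [hψ0 x]
            _ ≤ M := by rw [mul_one, hMdef]; linarith
      · have hxA : x ∉ A := fun h => hxB h.1
        have hd : ε ≤ dist x x₀ := le_of_not_gt (fun h => hxB (Metric.mem_ball.1 h |> Metric.mem_ball.2))
        rw [Set.indicator_of_notMem hxB, Set.indicator_of_notMem hxA,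
          hψ_out x hd, mul_zero, zero_sub, abs_neg, abs_zero]
    calc |∫ x, (B.indicator g x - g x * ψ x) ∂volume|
        ≤ ∫ x, |B.indicator g x - g x * ψ x| ∂volume := by
          rw [← Real.norm_eq_abs]
          exact (norm_integral_le_integral_norm _).trans (le_of_eq (by simp [Real.norm_eq_abs]))
      _ ≤ ∫ x, A.indicator (fun _ => M) x ∂volume := by
          apply integral_mono (hind.sub hgψint).abs _ hptwise
          exact (integrable_const M).indicator hAmeas
      _ = M * (volume A).toReal := by
          rw [integral_indicator_const M hAmeas, smul_eq_mul, mul_comm]; rfl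
    -- end bound
  -- apply weak convergence with the cutoff
  set ψb : BoundedContinuousFunction Torus3 ℝ :=
    BoundedContinuousFunction.mkOfCompact ⟨ψ, hψcont⟩ with hψbdef
  have hψb_apply : ∀ x, ψb x = ψ x := fun x => rfl
  have hc := hconv φ ψb
  simp only [hψb_apply] at hc
  rw [Metric.tendsto_atTop] at hc
  obtain ⟨N, hN⟩ := hc (η / 3) hη3
  refine ⟨N, fun n hn => ?_⟩
  have h1 : |(∫ x in B, φ (f n x) ∂volume) - ∫ x, φ (f n x) * ψ x ∂volume|
      ≤ M * (volume A).toReal :=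
    bound _ ((φ.continuous.measurable.comp (hf n)).aestronglyMeasurable) (hgbound n)
  have h2 : |(∫ x in B, F x ∂volume) - ∫ x, F x * ψ x ∂volume| ≤ M * (volume A).toReal :=
    bound F hF.aestronglyMeasurable hFbound
  have h3 : |(∫ x, φ (f n x) * ψ x ∂volume) - ∫ x, F x * ψ x ∂volume| < η / 3 := by
    have := hN n hn
    rwa [Real.dist_eq] at this
  rw [Real.dist_eq]
  calc |(∫ x in B, φ (f n x) ∂volume) - ∫ x in B, F x ∂volume|
      ≤ |(∫ x in B, φ (f n x) ∂volume) - ∫ x, φ (f n x) * ψ x ∂volume|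
        + |(∫ x, φ (f n x) * ψ x ∂volume) - ∫ x, F x * ψ x ∂volume|
        + |(∫ x, F x * ψ x ∂volume) - ∫ x in B, F x ∂volume| := by
        calc |(∫ x in B, φ (f n x) ∂volume) - ∫ x in B, F x ∂volume|
            ≤ |(∫ x in B, φ (f n x) ∂volume) - ∫ x, φ (f n x) * ψ x ∂volume|
              + |(∫ x, φ (f n x) * ψ x ∂volume) - ∫ x in B, F x ∂volume| :=
              abs_sub_le _ _ _
          _ ≤ |(∫ x in B, φ (f n x) ∂volume) - ∫ x, φ (f n x) * ψ x ∂volume|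
              + (|(∫ x, φ (f n x) * ψ x ∂volume) - ∫ x, F x * ψ x ∂volume|
                + |(∫ x, F x * ψ x ∂volume) - ∫ x in B, F x ∂volume|) :=
              add_le_add_right (abs_sub_le _ _ _) _
          _ = _ := by ring
    _ < η / 3 + η / 3 + η / 3 := by
        rw [abs_sub_comm (∫ x, F x * ψ x ∂volume)]
        exact add_lt_add (add_lt_add (h1.trans_lt hAsmall) h3) (h2.trans_lt hAsmall)
    _ = η := by ring
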